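/- arXiv:1504.00906 — 3 statements merged into one kernel-verified Lean document; each statement's English description precedes it below -/
import Mathlib

section
/- Suppose ε > 0 is such that r₁N₁(1 − N₁/K₁) − ā₁(x̄)N₁P ≥ r₁N₁/2 whenever 0 ≤ N₁ ≤ ε and 0 ≤ P ≤ ε (and x̄ ∈ ℝ). Then any solution of the predator–prey subsystem (N₂ ≡ 0) with 0 < N₁(0) and N₁(t) ≤ ε, P(t) ≤ ε for all t ≥ 0 satisfies N₁(t) ≥ N₁(0)e^{r₁t/2} for all t ≥ 0; consequently there is no bounded invariant set contained in {0 < N₁ ≤ ε, 0 ≤ P ≤ ε} with N₁ > 0. -/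
open Real

theorem prey_growth_near_origin
    (r₁ K₁ ε : ℝ) (hr₁ : 0 < r₁) (hK₁ : 0 < K₁) (hε : 0 < ε)
    (abar₁ : ℝ → ℝ) (hp₁ : ∀ x, 0 < abar₁ x)
    (hεprop : ∀ N₁ P xbar : ℝ, 0 ≤ N₁ → N₁ ≤ ε → 0 ≤ P → P ≤ ε →
      r₁ * N₁ * (1 - N₁ / K₁) - abar₁ xbar * N₁ * P ≥ r₁ * N₁ / 2)
    (N₁ P xbar : ℝ → ℝ)
    (hN₁ : ∀ t ≥ (0:ℝ), HasDerivAt N₁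
      (r₁ * N₁ t * (1 - N₁ t / K₁) - abar₁ (xbar t) * N₁ t * P t) t)
    (h0 : 0 < N₁ 0)
    (hbox : ∀ t ≥ (0:ℝ), 0 ≤ N₁ t ∧ N₁ t ≤ ε ∧ 0 ≤ P t ∧ P t ≤ ε) :
    (∀ t ≥ (0:ℝ), N₁ t ≥ N₁ 0 * Real.exp (r₁ * t / 2)) ∧
    (∀ C : ℝ, ∃ t ≥ (0:ℝ), N₁ t > C) := by
  set g : ℝ → ℝ := fun t => N₁ t * Real.exp (-(r₁ / 2) * t) with hg
  have hgd : ∀ t ≥ (0:ℝ), HasDerivAt g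
      ((r₁ * N₁ t * (1 - N₁ t / K₁) - abar₁ (xbar t) * N₁ t * P t
        - r₁ / 2 * N₁ t) * Real.exp (-(r₁ / 2) * t)) t := by
    intro t ht
    have he : HasDerivAt (fun t => Real.exp (-(r₁ / 2) * t))
        (-(r₁ / 2) * Real.exp (-(r₁ / 2) * t)) t := by
      have := ((hasDerivAt_id t).const_mul (-(r₁ / 2))).exp
      simpa [mul_comm] using this
    have := (hN₁ t ht).fun_mul he
    exact this.congr_deriv (by ring)
  have hderiv_nonneg : ∀ t ≥ (0:ℝ),
      0 ≤ (r₁ * N₁ t * (1 - N₁ t / K₁) - abar₁ (xbar t) * N₁ t * P t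
        - r₁ / 2 * N₁ t) * Real.exp (-(r₁ / 2) * t) := by
    intro t ht
    obtain ⟨h1, h2, h3, h4⟩ := hbox t ht
    have := hεprop (N₁ t) (P t) (xbar t) h1 h2 h3 h4
    have hfac : 0 ≤ r₁ * N₁ t * (1 - N₁ t / K₁) - abar₁ (xbar t) * N₁ t * P t
        - r₁ / 2 * N₁ t := by linarith
    positivity
  have hmono : MonotoneOn g (Set.Ici (0:ℝ)) := by
    apply monotoneOn_of_deriv_nonneg (convex_Ici 0)
    · intro t ht
      exact ((hgd t ht).continuousAt).continuousWithinAt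
    · intro t ht
      rw [interior_Ici] at ht
      exact (hgd t (le_of_lt ht)).differentiableAt.differentiableWithinAt
    · intro t ht
      rw [interior_Ici] at ht
      rw [(hgd t (le_of_lt ht)).deriv]
      exact hderiv_nonneg t (le_of_lt ht)
  have key : ∀ t ≥ (0:ℝ), N₁ t ≥ N₁ 0 * Real.exp (r₁ * t / 2) := by
    intro t ht
    have := hmono (Set.self_mem_Ici) (Set.mem_Ici.mpr ht) ht
    have hg0 : g 0 = N₁ 0 := by simp [hg]
    have hgt : g t = N₁ t * Real.exp (-(r₁ / 2) * t) := rfl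
    rw [hg0, hgt] at this
    have hepos : 0 < Real.exp (-(r₁ / 2) * t) := Real.exp_pos _
    have : N₁ 0 / Real.exp (-(r₁ / 2) * t) ≤ N₁ t :=
      (div_le_iff₀ hepos).mpr (by linarith)
    calc N₁ 0 * Real.exp (r₁ * t / 2)
        = N₁ 0 / Real.exp (-(r₁ / 2) * t) := by
          have harg : -(r₁ / 2) * t = -(r₁ * t / 2) := by ring
          rw [harg, Real.exp_neg]; field_simp
      _ ≤ N₁ t := this
  refine ⟨key, fun C => ?_⟩
  have htend : Filter.Tendsto (fun t => N₁ 0 * Real.exp (r₁ * t / 2))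
      Filter.atTop Filter.atTop := by
    apply Filter.Tendsto.const_mul_atTop h0
    exact Real.tendsto_exp_atTop.comp
      (Filter.Tendsto.atTop_div_const (by norm_num)
        (Filter.tendsto_id.const_mul_atTop hr₁))
  obtain ⟨t, ht⟩ := ((htend.eventually_gt_atTop C).and
    (Filter.eventually_ge_atTop (0:ℝ))).exists
  exact ⟨t, ht.2, lt_of_lt_of_le ht.1 (key t ht.2)⟩
end

section
/- Suppose a solution (N₁(t), P(t), x̄(t)) of the predator–prey subsystem satisfies N₁(t) ≥ β for all t ≥ T for some β > 0 and T ≥ 0, and x̄(t) remains bounded. Then lim_{t→∞} x̄(t) = θ₁. -/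
open Real Filter

theorem trait_converges_to_specialist
    (σG e₁ τ₁ α₁ σ θ₁ β T : ℝ)
    (hσG : 0 < σG) (he₁ : 0 < e₁) (hτ₁ : 0 < τ₁) (hα₁ : 0 < α₁) (hσ : 0 < σ)
    (hβ : 0 < β) (hT : 0 ≤ T)
    (N₁ P xbar : ℝ → ℝ)
    (hx : ∀ t : ℝ, HasDerivAt xbar
      (σG^2 * (e₁ * N₁ t * τ₁ * α₁ * (θ₁ - xbar t) / (τ₁^2 + σ^2)^((3:ℝ)/2) *
        Real.exp (-(xbar t - θ₁)^2 / (2 * (τ₁^2 + σ^2))))) t)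
    (hNβ : ∀ t ≥ T, N₁ t ≥ β)
    (hbdd : ∃ M : ℝ, ∀ t : ℝ, |xbar t| ≤ M) :
    Tendsto xbar atTop (nhds θ₁) := by
  obtain ⟨M, hM⟩ := hbdd
  have hs : (0:ℝ) < τ₁^2 + σ^2 := by positivity
  have hr : (0:ℝ) < (τ₁^2 + σ^2)^((3:ℝ)/2) := Real.rpow_pos_of_pos hs _
  -- k₀ ≤ c t for t ≥ T
  have hcge : ∀ t ≥ T,
      σG^2 * e₁ * β * τ₁ * α₁ / (τ₁^2 + σ^2)^((3:ℝ)/2) *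
        Real.exp (-(M + |θ₁|)^2 / (2*(τ₁^2 + σ^2))) ≤
      σG^2 * e₁ * N₁ t * τ₁ * α₁ / (τ₁^2 + σ^2)^((3:ℝ)/2) *
        Real.exp (-(xbar t - θ₁)^2 / (2*(τ₁^2 + σ^2))) := by
    intro t ht
    have hN := hNβ t ht
    have habs : |xbar t| ≤ M := hM t
    have hsq : (xbar t - θ₁)^2 ≤ (M + |θ₁|)^2 := by
      apply sq_le_sq'
      · have h1 : -M ≤ xbar t := neg_le_of_abs_le habs
        have h2 : θ₁ ≤ |θ₁| := le_abs_self _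
        linarith
      · have h1 : xbar t ≤ M := le_of_abs_le habs
        have h2 : -|θ₁| ≤ θ₁ := neg_abs_le _
        linarith
    have hN0 : (0:ℝ) ≤ N₁ t := le_trans hβ.le hN
    gcongr <;> first
      | exact hN
      | exact div_nonneg (mul_nonneg (mul_nonneg (mul_nonneg
          (mul_nonneg (sq_nonneg σG) he₁.le) hN0) hτ₁.le) hα₁.le) hr.le
  set k₀ : ℝ := σG^2 * e₁ * β * τ₁ * α₁ / (τ₁^2 + σ^2)^((3:ℝ)/2) *
    Real.exp (-(M + |θ₁|)^2 / (2*(τ₁^2 + σ^2))) with hk_def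
  set c : ℝ → ℝ := fun t => σG^2 * e₁ * N₁ t * τ₁ * α₁ / (τ₁^2 + σ^2)^((3:ℝ)/2) *
    Real.exp (-(xbar t - θ₁)^2 / (2*(τ₁^2 + σ^2))) with hc_def
  have hk₀ : 0 < k₀ := by rw [hk_def]; positivity
  have hcge' : ∀ t ≥ T, k₀ ≤ c t := hcge
  -- the decreasing Lyapunov function
  set g : ℝ → ℝ := fun t => (xbar t - θ₁)^2 * Real.exp (2*k₀*t) with hg_def
  have hg' : ∀ t : ℝ, HasDerivAt g
      ((2*(xbar t - θ₁) * (c t * (θ₁ - xbar t)) + 2*k₀*(xbar t - θ₁)^2) *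
        Real.exp (2*k₀*t)) t := by
    intro t
    have hd : HasDerivAt xbar (c t * (θ₁ - xbar t)) t := by
      have := hx t
      convert this using 1
      rw [hc_def]
      ring
    have h1 : HasDerivAt (fun u => (xbar u - θ₁)^2)
        (2*(xbar t - θ₁) * (c t * (θ₁ - xbar t))) t := by
      have := (hd.sub_const θ₁).fun_pow 2
      refine this.congr_deriv ?_
      ring
    have h2 : HasDerivAt (fun u => Real.exp (2*k₀*u))
        (Real.exp (2*k₀*t) * (2*k₀)) t := by
      simpa using ((hasDerivAt_id t).const_mul (2*k₀)).exp
    have := h1.fun_mul h2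
    refine this.congr_deriv ?_
    ring
  have hganti : AntitoneOn g (Set.Ici T) := by
    apply antitoneOn_of_deriv_nonpos (convex_Ici T)
    · exact fun t _ => ((hg' t).continuousAt).continuousWithinAt
    · exact fun t _ => ((hg' t).differentiableAt).differentiableWithinAt
    · intro t ht
      rw [interior_Ici] at ht
      rw [(hg' t).deriv]
      have hct := hcge' t (le_of_lt ht)
      have hkey : 2*(xbar t - θ₁) * (c t * (θ₁ - xbar t)) + 2*k₀*(xbar t - θ₁)^2
          = 2*(k₀ - c t)*(xbar t - θ₁)^2 := by ring
      rw [hkey]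
      have h1 : 2*(k₀ - c t) ≤ 0 := by linarith
      have h2 := mul_nonpos_of_nonpos_of_nonneg h1 (sq_nonneg (xbar t - θ₁))
      exact mul_nonpos_of_nonpos_of_nonneg h2 (Real.exp_pos _).le
  have hbound : ∀ t ≥ T, (xbar t - θ₁)^2 ≤ g T * Real.exp (-(2*k₀*t)) := by
    intro t ht
    have h1 : g t ≤ g T := hganti (Set.self_mem_Ici) (Set.mem_Ici.mpr ht) ht
    have h2 : (xbar t - θ₁)^2 = g t * Real.exp (-(2*k₀*t)) := by
      rw [hg_def]
      simp only
      rw [mul_assoc, ← Real.exp_add, add_neg_cancel, Real.exp_zero, mul_one]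
    rw [h2]
    exact mul_le_mul_of_nonneg_right h1 (Real.exp_pos _).le
  have hsqtendsto : Tendsto (fun t => (xbar t - θ₁)^2) atTop (nhds 0) := by
    have hub : Tendsto (fun t : ℝ => g T * Real.exp (-(2*k₀*t))) atTop (nhds 0) := by
      have h1 : Tendsto (fun t : ℝ => -(2*k₀*t)) atTop atBot := by
        have := (tendsto_id (α := ℝ)).const_mul_atTop_of_neg
          (show -(2*k₀) < 0 by linarith)
        simpa [neg_mul] using this
      have h2 : Tendsto (fun t : ℝ => Real.exp (-(2*k₀*t))) atTop (nhds 0) :=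
        Real.tendsto_exp_atBot.comp h1
      simpa using h2.const_mul (g T)
    apply squeeze_zero' (Eventually.of_forall fun t => sq_nonneg _)
      ((eventually_ge_atTop T).mono fun t ht => hbound t ht) hub
  have habs : Tendsto (fun t => |xbar t - θ₁|) atTop (nhds 0) := by
    have h := (Real.continuous_sqrt.tendsto 0).comp hsqtendsto
    simpa [Function.comp_def, Real.sqrt_sq_eq_abs] using h
  have hsub : Tendsto (fun t => xbar t - θ₁) atTop (nhds 0) := by
    rw [tendsto_zero_iff_abs_tendsto_zero]
    exact habs
  have := hsub.add_const θ₁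
  simpa using this
end

section
/- Fix τ₁ = τ₂ = τ > 0 and σ > 0, and suppose |θ₂ − θ₁| ≤ 2√(σ²+τ²). Then for any e₁, e₂, N₁, N₂, α₁, α₂ > 0, the predator fitness x̄ ↦ W̄(x̄) = e₁ā₁(x̄)N₁ + e₂ā₂(x̄)N₂ − d has exactly one local (hence global) maximum on ℝ; equivalently the selection gradient ∂W̄/∂x̄ has exactly one zero, which is a sign change from positive to negative. -/
open Real

private noncomputable def Haux (A B θ₁ θ₂ s2 x : ℝ) : ℝ :=
  A * (θ₁ - x) * Real.exp ((x - θ₂)^2 / (2 * s2)) +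
  B * (θ₂ - x) * Real.exp ((x - θ₁)^2 / (2 * s2))

private lemma Haux_hasDerivAt (A B θ₁ θ₂ s2 : ℝ) (hs2 : 0 < s2) (x : ℝ) :
    HasDerivAt (Haux A B θ₁ θ₂ s2)
      (-(((x - θ₁) * (x - θ₂) + s2) / s2) *
        (A * Real.exp ((x - θ₂)^2 / (2 * s2)) + B * Real.exp ((x - θ₁)^2 / (2 * s2)))) x := by
  have hq2 : HasDerivAt (fun x => (x - θ₂)^2 / (2 * s2))
      ((2:ℕ) * (x - θ₂)^1 * 1 / (2 * s2)) x :=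
    (((hasDerivAt_id x).sub_const θ₂).pow 2).div_const _
  have hq1 : HasDerivAt (fun x => (x - θ₁)^2 / (2 * s2))
      ((2:ℕ) * (x - θ₁)^1 * 1 / (2 * s2)) x :=
    (((hasDerivAt_id x).sub_const θ₁).pow 2).div_const _
  have h1 : HasDerivAt (fun x => A * (θ₁ - x) * Real.exp ((x - θ₂)^2 / (2 * s2)))
      ((A * (0 - 1)) * Real.exp ((x - θ₂)^2 / (2 * s2)) +
        A * (θ₁ - x) * (Real.exp ((x - θ₂)^2 / (2 * s2)) * ((2:ℕ) * (x - θ₂)^1 * 1 / (2 * s2)))) x := by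
    simpa [Pi.mul_def] using (((hasDerivAt_const x θ₁).sub (hasDerivAt_id x)).const_mul A).mul hq2.exp
  have h2 : HasDerivAt (fun x => B * (θ₂ - x) * Real.exp ((x - θ₁)^2 / (2 * s2)))
      ((B * (0 - 1)) * Real.exp ((x - θ₁)^2 / (2 * s2)) +
        B * (θ₂ - x) * (Real.exp ((x - θ₁)^2 / (2 * s2)) * ((2:ℕ) * (x - θ₁)^1 * 1 / (2 * s2)))) x := by
    simpa [Pi.mul_def] using (((hasDerivAt_const x θ₂).sub (hasDerivAt_id x)).const_mul B).mul hq1.exp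
  have : HasDerivAt (Haux A B θ₁ θ₂ s2) _ x := h1.add h2
  convert this using 1
  field_simp
  ring

private lemma Haux_strictAnti (A B θ₁ θ₂ s2 : ℝ) (hA : 0 < A) (hB : 0 < B) (hs2 : 0 < s2)
    (hθ : (θ₂ - θ₁)^2 ≤ 4 * s2) : StrictAnti (Haux A B θ₁ θ₂ s2) := by
  have hderiv : ∀ x : ℝ, deriv (Haux A B θ₁ θ₂ s2) x =
      -(((x - θ₁) * (x - θ₂) + s2) / s2) *
        (A * Real.exp ((x - θ₂)^2 / (2 * s2)) + B * Real.exp ((x - θ₁)^2 / (2 * s2))) :=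
    fun x => (Haux_hasDerivAt A B θ₁ θ₂ s2 hs2 x).deriv
  have hcont : Continuous (Haux A B θ₁ θ₂ s2) := by
    unfold Haux; fun_prop
  have hneg : ∀ x : ℝ, x ≠ (θ₁ + θ₂) / 2 → deriv (Haux A B θ₁ θ₂ s2) x < 0 := by
    intro x hx
    rw [hderiv]
    have hx2 : 0 < (x - (θ₁ + θ₂) / 2)^2 :=
      lt_of_le_of_ne (sq_nonneg _) (Ne.symm (pow_ne_zero 2 (sub_ne_zero.mpr hx)))
    have key : 0 < (x - θ₁) * (x - θ₂) + s2 := by nlinarith [hx2, hθ]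
    have hpos : 0 < A * Real.exp ((x - θ₂)^2 / (2 * s2)) + B * Real.exp ((x - θ₁)^2 / (2 * s2)) := by
      positivity
    exact mul_neg_of_neg_of_pos (neg_lt_zero.mpr (div_pos key hs2)) hpos
  have h1 : StrictAntiOn (Haux A B θ₁ θ₂ s2) (Set.Iic ((θ₁ + θ₂) / 2)) := by
    apply strictAntiOn_of_deriv_neg (convex_Iic _) hcont.continuousOn
    intro x hx
    rw [interior_Iic] at hx
    exact hneg x (ne_of_lt hx)
  have h2 : StrictAntiOn (Haux A B θ₁ θ₂ s2) (Set.Ici ((θ₁ + θ₂) / 2)) := by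
    apply strictAntiOn_of_deriv_neg (convex_Ici _) hcont.continuousOn
    intro x hx
    rw [interior_Ici] at hx
    exact hneg x (ne_of_gt hx)
  intro x y hxy
  rcases le_or_gt y ((θ₁ + θ₂) / 2) with hy | hy
  · exact h1 (Set.mem_Iic.mpr ((hxy.trans_le hy).le)) (Set.mem_Iic.mpr hy) hxy
  · rcases le_or_gt ((θ₁ + θ₂) / 2) x with hx | hx
    · exact h2 (Set.mem_Ici.mpr hx) (Set.mem_Ici.mpr (hx.trans hxy.le)) hxy
    · exact (h2 (Set.mem_Ici.mpr le_rfl) (Set.mem_Ici.mpr hy.le) hy).trans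
        (h1 (Set.mem_Iic.mpr hx.le) (Set.mem_Iic.mpr le_rfl) hx)

private lemma key_lemma (A B θ₁ θ₂ s2 : ℝ) (hA : 0 < A) (hB : 0 < B) (hs2 : 0 < s2)
    (hθ : (θ₂ - θ₁)^2 ≤ 4 * s2) :
    ∃ x₀ : ℝ,
      (A * (θ₁ - x₀) * Real.exp (-(x₀ - θ₁)^2 / (2 * s2)) +
        B * (θ₂ - x₀) * Real.exp (-(x₀ - θ₂)^2 / (2 * s2)) = 0) ∧
      (∀ x < x₀, 0 < A * (θ₁ - x) * Real.exp (-(x - θ₁)^2 / (2 * s2)) +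
        B * (θ₂ - x) * Real.exp (-(x - θ₂)^2 / (2 * s2))) ∧
      (∀ x, x₀ < x → A * (θ₁ - x) * Real.exp (-(x - θ₁)^2 / (2 * s2)) +
        B * (θ₂ - x) * Real.exp (-(x - θ₂)^2 / (2 * s2)) < 0) ∧
      (∀ x : ℝ, A * (θ₁ - x) * Real.exp (-(x - θ₁)^2 / (2 * s2)) +
        B * (θ₂ - x) * Real.exp (-(x - θ₂)^2 / (2 * s2)) = 0 → x = x₀) := by
  have hanti := Haux_strictAnti A B θ₁ θ₂ s2 hA hB hs2 hθ
  have hcont : Continuous (Haux A B θ₁ θ₂ s2) := by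
    unfold Haux; fun_prop
  have hexp : ∀ p p' q : ℝ, p + p' = 0 →
      Real.exp p * (Real.exp p' * Real.exp q) = Real.exp q := by
    intro p p' q h
    rw [← Real.exp_add, ← Real.exp_add, show p + (p' + q) = q by linarith]
  have hF : ∀ x : ℝ,
      A * (θ₁ - x) * Real.exp (-(x - θ₁)^2 / (2 * s2)) +
        B * (θ₂ - x) * Real.exp (-(x - θ₂)^2 / (2 * s2)) =
      Haux A B θ₁ θ₂ s2 x *
        (Real.exp (-(x - θ₁)^2 / (2 * s2)) * Real.exp (-(x - θ₂)^2 / (2 * s2))) := by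
    intro x
    have c1 : Haux A B θ₁ θ₂ s2 x *
        (Real.exp (-(x - θ₁)^2 / (2 * s2)) * Real.exp (-(x - θ₂)^2 / (2 * s2))) =
        A * (θ₁ - x) * (Real.exp ((x - θ₂)^2 / (2 * s2)) *
          (Real.exp (-(x - θ₂)^2 / (2 * s2)) * Real.exp (-(x - θ₁)^2 / (2 * s2)))) +
        B * (θ₂ - x) * (Real.exp ((x - θ₁)^2 / (2 * s2)) *
          (Real.exp (-(x - θ₁)^2 / (2 * s2)) * Real.exp (-(x - θ₂)^2 / (2 * s2)))) := by
      unfold Haux; ring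
    rw [c1, hexp _ _ _ (by ring), hexp _ _ _ (by ring)]
  obtain ⟨a, b, hab, hHa, hHb⟩ : ∃ a b : ℝ, a ≤ b ∧
      0 < Haux A B θ₁ θ₂ s2 a ∧ Haux A B θ₁ θ₂ s2 b < 0 := by
    refine ⟨min θ₁ θ₂ - 1, max θ₁ θ₂ + 1, by
      have := min_le_max (a := θ₁) (b := θ₂); linarith, ?_, ?_⟩
    · have h1 : 0 < θ₁ - (min θ₁ θ₂ - 1) := by have := min_le_left θ₁ θ₂; linarith
      have h2 : 0 < θ₂ - (min θ₁ θ₂ - 1) := by have := min_le_right θ₁ θ₂; linarith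
      unfold Haux; positivity
    · have h1 : θ₁ - (max θ₁ θ₂ + 1) < 0 := by have := le_max_left θ₁ θ₂; linarith
      have h2 : θ₂ - (max θ₁ θ₂ + 1) < 0 := by have := le_max_right θ₁ θ₂; linarith
      unfold Haux
      have t1 : A * (θ₁ - (max θ₁ θ₂ + 1)) *
          Real.exp ((max θ₁ θ₂ + 1 - θ₂)^2 / (2 * s2)) < 0 :=
        mul_neg_of_neg_of_pos (mul_neg_of_pos_of_neg hA h1) (Real.exp_pos _)
      have t2 : B * (θ₂ - (max θ₁ θ₂ + 1)) *
          Real.exp ((max θ₁ θ₂ + 1 - θ₁)^2 / (2 * s2)) < 0 :=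
        mul_neg_of_neg_of_pos (mul_neg_of_pos_of_neg hB h2) (Real.exp_pos _)
      linarith
  have hmem : (0:ℝ) ∈ Set.Icc (Haux A B θ₁ θ₂ s2 b) (Haux A B θ₁ θ₂ s2 a) :=
    ⟨le_of_lt hHb, le_of_lt hHa⟩
  obtain ⟨x₀, _, hx₀⟩ := intermediate_value_Icc' hab hcont.continuousOn hmem
  refine ⟨x₀, ?_, ?_, ?_, ?_⟩
  · rw [hF x₀, hx₀]; ring
  · intro x hx
    rw [hF x]
    have hH : 0 < Haux A B θ₁ θ₂ s2 x := hx₀ ▸ hanti hx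
    positivity
  · intro x hx
    rw [hF x]
    have hH : Haux A B θ₁ θ₂ s2 x < 0 := hx₀ ▸ hanti hx
    exact mul_neg_of_neg_of_pos hH (by positivity)
  · intro x hx
    rw [hF x] at hx
    have hp : (0:ℝ) < Real.exp (-(x - θ₁)^2 / (2 * s2)) * Real.exp (-(x - θ₂)^2 / (2 * s2)) := by
      positivity
    have hH : Haux A B θ₁ θ₂ s2 x = 0 := by
      rcases mul_eq_zero.mp hx with h | h
      · exact h
      · exact absurd h (ne_of_gt hp)
    exact hanti.injective (hH.trans hx₀.symm)

theorem weak_tradeoff_unimodal_fitness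
    (τ σ θ₁ θ₂ e₁ e₂ N₁ N₂ α₁ α₂ d : ℝ)
    (hτ : 0 < τ) (hσ : 0 < σ)
    (hθ : |θ₂ - θ₁| ≤ 2 * Real.sqrt (σ^2 + τ^2))
    (he₁ : 0 < e₁) (he₂ : 0 < e₂) (hN₁ : 0 < N₁) (hN₂ : 0 < N₂)
    (hα₁ : 0 < α₁) (hα₂ : 0 < α₂) :
    let G : ℝ → ℝ := fun xbar =>
      e₁ * N₁ * τ * α₁ * (θ₁ - xbar) / (τ^2 + σ^2)^((3:ℝ)/2) *
        Real.exp (-(xbar - θ₁)^2 / (2 * (τ^2 + σ^2))) +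
      e₂ * N₂ * τ * α₂ * (θ₂ - xbar) / (τ^2 + σ^2)^((3:ℝ)/2) *
        Real.exp (-(xbar - θ₂)^2 / (2 * (τ^2 + σ^2)))
    ∃ x₀ : ℝ, G x₀ = 0 ∧ (∀ x < x₀, 0 < G x) ∧ (∀ x, x₀ < x → G x < 0) ∧
      (∀ x : ℝ, G x = 0 → x = x₀) := by
  intro G
  have hs2 : (0:ℝ) < τ^2 + σ^2 := by positivity
  have hC : (0:ℝ) < (τ^2 + σ^2)^((3:ℝ)/2) := Real.rpow_pos_of_pos hs2 _
  have hA : 0 < e₁ * N₁ * τ * α₁ / (τ^2 + σ^2)^((3:ℝ)/2) := by positivity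
  have hB : 0 < e₂ * N₂ * τ * α₂ / (τ^2 + σ^2)^((3:ℝ)/2) := by positivity
  have hθ' : (θ₂ - θ₁)^2 ≤ 4 * (τ^2 + σ^2) := by
    have h1 : |θ₂ - θ₁|^2 ≤ (2 * Real.sqrt (σ^2 + τ^2))^2 :=
      pow_le_pow_left₀ (abs_nonneg _) hθ 2
    rw [sq_abs] at h1
    have h2 : Real.sqrt (σ^2 + τ^2)^2 = σ^2 + τ^2 := Real.sq_sqrt (by positivity)
    nlinarith [h1, h2]
  obtain ⟨x₀, h0, hpos, hneg, huniq⟩ :=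
    key_lemma (e₁ * N₁ * τ * α₁ / (τ^2 + σ^2)^((3:ℝ)/2))
      (e₂ * N₂ * τ * α₂ / (τ^2 + σ^2)^((3:ℝ)/2)) θ₁ θ₂ (τ^2 + σ^2) hA hB hs2 hθ'
  have hG : ∀ x : ℝ, G x =
      e₁ * N₁ * τ * α₁ / (τ^2 + σ^2)^((3:ℝ)/2) * (θ₁ - x) *
        Real.exp (-(x - θ₁)^2 / (2 * (τ^2 + σ^2))) +
      e₂ * N₂ * τ * α₂ / (τ^2 + σ^2)^((3:ℝ)/2) * (θ₂ - x) *
        Real.exp (-(x - θ₂)^2 / (2 * (τ^2 + σ^2))) := by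
    intro x
    show _ = _
    ring
  refine ⟨x₀, ?_, ?_, ?_, ?_⟩
  · rw [hG x₀]; exact h0
  · intro x hx; rw [hG x]; exact hpos x hx
  · intro x hx; rw [hG x]; exact hneg x hx
  · intro x hx; rw [hG x] at hx; exact huniq x hx
end
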